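/- Let δ > 0 and 0 < κ ≤ 1 be reals, let r ≥ 1 and b be positive integers with b ≥ 3 δ^{−3} κ^{−2}, set n = r·b, and let H be a nonempty finite pairwise independent family of functions from [n] = {1,...,n} to [r] = {1,...,r}. Then for any three subsets A_1, A_2, A_3 ⊆ [n] with |A_i| ≥ κn for each i ∈ {1,2,3}, there exist h ∈ H and a set Q ⊆ [r] with |Q| ≤ δr such that for every j ∈ [r] \ Q and every i ∈ {1,2,3}: | |A_i ∩ h^{−1}(j)| − |A_i|/r | ≤ δ|A_i|/r (that is, each A_i is (δ,r)-balanced onto h^{−1}(j) for all j outside Q). -/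

import Mathlib

open Finset

lemma onewise {n r N : ℕ} (H : Fin N → (Fin n → Fin r)) (hr : 0 < r) (hn2 : 2 ≤ n)
    (hpi : ∀ i i' : Fin n, i ≠ i' → ∀ j j' : Fin r,
      (Finset.univ.filter (fun a : Fin N => H a i = j ∧ H a i' = j')).card * r ^ 2 = N)
    (x : Fin n) (j : Fin r) :
    (Finset.univ.filter (fun a : Fin N => H a x = j)).card * r = N := by
  have hcard : 1 < Fintype.card (Fin n) := by simp; omega
  obtain ⟨x', hx'⟩ := Fintype.exists_ne_of_one_lt_card hcard x
  have hsplit : (Finset.univ.filter (fun a : Fin N => H a x = j)).card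
      = ∑ j' : Fin r, (Finset.univ.filter
          (fun a : Fin N => H a x = j ∧ H a x' = j')).card := by
    rw [Finset.card_eq_sum_card_fiberwise (f := fun a => H a x')
      (t := Finset.univ) (fun a _ => Finset.mem_univ _)]
    exact Finset.sum_congr rfl fun j' _ => by rw [Finset.filter_filter]
  have h2 : (Finset.univ.filter (fun a : Fin N => H a x = j)).card * r ^ 2 = r * N := by
    rw [hsplit, Finset.sum_mul]
    rw [Finset.sum_congr rfl fun j' _ => hpi x x' (fun h => hx' h.symm) j j']
    simp [mul_comm]
  have h3 : (Finset.univ.filter (fun a : Fin N => H a x = j)).card * r * r = N * r := by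
    rw [mul_assoc, ← pow_two, h2, mul_comm]
  exact Nat.eq_of_mul_eq_mul_right hr h3

lemma sumX {n r N : ℕ} (H : Fin N → (Fin n → Fin r))
    (h1 : ∀ (x : Fin n) (j : Fin r),
      (Finset.univ.filter (fun a : Fin N => H a x = j)).card * r = N)
    (A : Finset (Fin n)) (j : Fin r) :
    (∑ a : Fin N, (A.filter fun x => H a x = j).card) * r = A.card * N := by
  have hswap : ∑ a : Fin N, (A.filter fun x => H a x = j).card
      = ∑ x ∈ A, (Finset.univ.filter (fun a : Fin N => H a x = j)).card := by
    simp only [Finset.card_filter]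
    exact Finset.sum_comm
  rw [hswap, Finset.sum_mul, Finset.sum_congr rfl fun x _ => h1 x j]
  simp [mul_comm]

lemma sumX2 {n r N : ℕ} (H : Fin N → (Fin n → Fin r)) (hr : 1 ≤ r)
    (h1 : ∀ (x : Fin n) (j : Fin r),
      (Finset.univ.filter (fun a : Fin N => H a x = j)).card * r = N)
    (hpi : ∀ i i' : Fin n, i ≠ i' → ∀ j j' : Fin r,
      (Finset.univ.filter (fun a : Fin N => H a i = j ∧ H a i' = j')).card * r ^ 2 = N)
    (A : Finset (Fin n)) (j : Fin r) :
    (∑ a : Fin N, ((A.filter fun x => H a x = j).card) ^ 2) * r ^ 2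
      = (r - 1) * N * A.card + A.card ^ 2 * N := by
  have key : ∑ a : Fin N, ((A.filter fun x => H a x = j).card) ^ 2
      = ∑ x ∈ A, ∑ y ∈ A,
          (Finset.univ.filter (fun a : Fin N => H a x = j ∧ H a y = j)).card := by
    simp only [Finset.card_filter, sq]
    rw [Finset.sum_congr rfl fun a _ => Finset.sum_mul_sum A A _ _]
    rw [Finset.sum_comm]
    refine Finset.sum_congr rfl fun x _ => ?_
    rw [Finset.sum_comm]
    refine Finset.sum_congr rfl fun y _ => ?_
    refine Finset.sum_congr rfl fun a _ => ?_
    by_cases h1 : H a x = j <;> by_cases h2 : H a y = j <;> simp [h1, h2]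
  rw [key, Finset.sum_mul]
  have inner : ∀ x ∈ A, (∑ y ∈ A,
      (Finset.univ.filter (fun a : Fin N => H a x = j ∧ H a y = j)).card) * r ^ 2
      = (r - 1) * N + A.card * N := by
    intro x hx
    rw [Finset.sum_mul]
    have hterm : ∀ y ∈ A,
        (Finset.univ.filter (fun a : Fin N => H a x = j ∧ H a y = j)).card * r ^ 2
          = (if x = y then (r - 1) * N else 0) + N := by
      intro y _
      by_cases hxy : x = y
      · subst hxy
        simp only [and_self, if_pos rfl]
        have : (Finset.univ.filter (fun a : Fin N => H a x = j)).card * r ^ 2 = N * r := by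
          rw [pow_two, ← mul_assoc, h1 x j]
        rw [this, if_pos trivial]
        cases r with
        | zero => omega
        | succ k => simp [Nat.succ_sub_one, Nat.succ_mul]; ring
      · rw [hpi x y hxy j j, if_neg hxy, zero_add]
    rw [Finset.sum_congr rfl hterm, Finset.sum_add_distrib, Finset.sum_ite_eq A x fun _ => (r-1)*N,
      if_pos hx, Finset.sum_const, smul_eq_mul]
  rw [Finset.sum_congr rfl inner, Finset.sum_add_distrib]
  simp [Finset.sum_const, smul_eq_mul, sq]
  ring

lemma varsum {n r N : ℕ} (H : Fin N → (Fin n → Fin r)) (hr : 1 ≤ r)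
    (h1 : ∀ (x : Fin n) (j : Fin r),
      (Finset.univ.filter (fun a : Fin N => H a x = j)).card * r = N)
    (hpi : ∀ i i' : Fin n, i ≠ i' → ∀ j j' : Fin r,
      (Finset.univ.filter (fun a : Fin N => H a i = j ∧ H a i' = j')).card * r ^ 2 = N)
    (A : Finset (Fin n)) (j : Fin r) :
    ∑ a : Fin N, (((A.filter fun x => H a x = j).card : ℝ) - A.card / r) ^ 2
      = ((r : ℝ) - 1) * N * A.card / r ^ 2 := by
  have hr0 : (0:ℝ) < r := by exact_mod_cast hr
  have hB : (∑ a : Fin N, ((A.filter fun x => H a x = j).card : ℝ))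
      = A.card * N / r := by
    have := sumX H h1 A j
    have : ((∑ a : Fin N, (A.filter fun x => H a x = j).card : ℕ) : ℝ) * r
        = A.card * N := by exact_mod_cast congrArg (Nat.cast (R := ℝ)) this
    push_cast at this
    field_simp
    linarith [this]
  have hC : (∑ a : Fin N, ((A.filter fun x => H a x = j).card : ℝ) ^ 2)
      = (((r : ℝ) - 1) * N * A.card + (A.card : ℝ) ^ 2 * N) / r ^ 2 := by
    have h := sumX2 H hr h1 hpi A j
    have h' : ((∑ a : Fin N, ((A.filter fun x => H a x = j).card) ^ 2 : ℕ) : ℝ) * r ^ 2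
        = ((r : ℝ) - 1) * N * A.card + (A.card : ℝ) ^ 2 * N := by
      have hc := congrArg (Nat.cast (R := ℝ)) h
      push_cast [Nat.cast_sub hr] at hc
      exact_mod_cast hc
    push_cast at h'
    field_simp
    linarith [h']
  have expand : ∑ a : Fin N, (((A.filter fun x => H a x = j).card : ℝ) - A.card / r) ^ 2
      = (∑ a : Fin N, ((A.filter fun x => H a x = j).card : ℝ) ^ 2)
        - 2 * ((A.card : ℝ) / r) * (∑ a : Fin N, ((A.filter fun x => H a x = j).card : ℝ))
        + N * ((A.card : ℝ) / r) ^ 2 := by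
    rw [Finset.mul_sum, ← Finset.sum_sub_distrib]
    rw [show (N : ℝ) * ((A.card : ℝ)/r)^2 = ∑ _a : Fin N, ((A.card : ℝ)/r)^2 by
      simp [Finset.sum_const]]
    rw [← Finset.sum_add_distrib]
    exact Finset.sum_congr rfl fun a _ => by ring
  rw [expand, hB, hC]
  field_simp
  ring

/-- Central claim for constructing balancing families: if `b ≥ 3δ⁻³κ⁻²` and
`n = r·b`, then for any three sets `A₁, A₂, A₃ ⊆ [n]` of size at least `κn`
there exist `h ∈ H` and `Q ⊆ [r]` with `|Q| ≤ δr` such that each `Aᵢ` is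
`(δ, r)`-balanced onto `h⁻¹(j)` for every `j ∈ [r] \ Q`. -/
theorem stmt11 (δ κ : ℝ) (hδ : 0 < δ) (hκ0 : 0 < κ) (hκ1 : κ ≤ 1)
    (r b : ℕ) (hr : 1 ≤ r) (hb0 : 0 < b)
    (hb : 3 / (δ ^ 3 * κ ^ 2) ≤ (b : ℝ))
    (n : ℕ) (hn : n = r * b)
    (N : ℕ) (hN : 0 < N) (H : Fin N → (Fin n → Fin r))
    (hpi : ∀ i i' : Fin n, i ≠ i' → ∀ j j' : Fin r,
      (Finset.univ.filter (fun a : Fin N => H a i = j ∧ H a i' = j')).card * r ^ 2 = N)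
    (A : Fin 3 → Finset (Fin n)) (hA : ∀ i, κ * n ≤ ((A i).card : ℝ)) :
    ∃ a : Fin N, ∃ Q : Finset (Fin r), (Q.card : ℝ) ≤ δ * r ∧
      ∀ j : Fin r, j ∉ Q → ∀ i : Fin 3,
        |(((A i).filter (fun x => H a x = j)).card : ℝ) - ((A i).card : ℝ) / r|
          ≤ δ * ((A i).card : ℝ) / r := by
  classical
  have hr0 : (0:ℝ) < r := by exact_mod_cast hr
  by_cases hn2 : 2 ≤ n
  · -- main case
    have h1 := onewise H hr hn2 hpi
    -- average of the total squared deviation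
    have htot : ∑ a : Fin N, ∑ i : Fin 3, ∑ j : Fin r,
        ((((A i).filter fun x => H a x = j).card : ℝ) - (A i).card / r) ^ 2
        ≤ ∑ _a : Fin N, (3 * n : ℝ) := by
      rw [Finset.sum_comm]
      rw [show (∑ i : Fin 3, ∑ a : Fin N, ∑ j : Fin r,
          ((((A i).filter fun x => H a x = j).card : ℝ) - (A i).card / r) ^ 2)
        = ∑ i : Fin 3, ∑ j : Fin r, ∑ a : Fin N,
          ((((A i).filter fun x => H a x = j).card : ℝ) - (A i).card / r) ^ 2 from
        Finset.sum_congr rfl fun i _ => Finset.sum_comm]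
      simp only [Finset.sum_const, Finset.card_univ, Fintype.card_fin, nsmul_eq_mul]
      have hi : ∀ i : Fin 3, ∑ j : Fin r, ∑ a : Fin N,
          ((((A i).filter fun x => H a x = j).card : ℝ) - (A i).card / r) ^ 2
          ≤ (N : ℝ) * n := by
        intro i
        have : ∀ j : Fin r, ∑ a : Fin N,
            ((((A i).filter fun x => H a x = j).card : ℝ) - (A i).card / r) ^ 2
            = ((r : ℝ) - 1) * N * (A i).card / r ^ 2 := fun j => varsum H hr h1 hpi (A i) j
        rw [Finset.sum_congr rfl fun j _ => this j]
        simp only [Finset.sum_const, Finset.card_univ, Fintype.card_fin, nsmul_eq_mul]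
        have hcardn : ((A i).card : ℝ) ≤ n := by
          exact_mod_cast (Finset.card_le_univ (A i)).trans_eq (by simp)
        have hAnn : (0:ℝ) ≤ ((A i).card : ℝ) := Nat.cast_nonneg _
        have hN0 : (0:ℝ) ≤ N := Nat.cast_nonneg _
        have step : (r:ℝ) * (((r : ℝ) - 1) * N * (A i).card / r ^ 2)
            ≤ (r:ℝ) * ((r : ℝ) * N * (A i).card / r ^ 2) := by
          gcongr
          linarith
        refine step.trans ?_
        have : (r:ℝ) * ((r : ℝ) * N * (A i).card / r ^ 2) = N * (A i).card := by
          field_simp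
        rw [this]
        gcongr
      calc ∑ i : Fin 3, ∑ j : Fin r, ∑ a : Fin N,
            ((((A i).filter fun x => H a x = j).card : ℝ) - (A i).card / r) ^ 2
          ≤ ∑ _i : Fin 3, (N : ℝ) * n := Finset.sum_le_sum fun i _ => hi i
        _ = (N : ℝ) * (3 * n) := by simp [Finset.sum_const, nsmul_eq_mul]; ring
    have htot' : ∑ a : Fin N, ∑ i : Fin 3, ∑ j : Fin r,
        ((((A i).filter fun x => H a x = j).card : ℝ) - (A i).card / r) ^ 2
        ≤ ∑ _a : Fin N, (3 * (n:ℝ)) := by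
      simpa using htot
    obtain ⟨a, -, ha⟩ := Finset.exists_le_of_sum_le (s := (Finset.univ : Finset (Fin N)))
      (Finset.univ_nonempty_iff.mpr ⟨⟨0, hN⟩⟩) htot'
    set Q : Finset (Fin r) := Finset.univ.filter fun j : Fin r =>
      ¬ ∀ i : Fin 3, |(((A i).filter (fun x => H a x = j)).card : ℝ) - ((A i).card : ℝ) / r|
          ≤ δ * ((A i).card : ℝ) / r with hQ
    refine ⟨a, Q, ?_, ?_⟩
    · -- cardinality bound
      have hn0 : (0:ℝ) < n := by
        have : 0 < n := by rw [hn]; positivity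
        exact_mod_cast this
      have hkey : (Q.card : ℝ) * (δ ^ 2 * κ ^ 2 * n ^ 2 / r ^ 2) ≤ 3 * n := by
        refine le_trans ?_ ha
        have hperj : ∀ j ∈ Q, (δ ^ 2 * κ ^ 2 * (n:ℝ) ^ 2 / r ^ 2) ≤ ∑ i : Fin 3,
            ((((A i).filter fun x => H a x = j).card : ℝ) - (A i).card / r) ^ 2 := by
          intro j hj
          rw [hQ, Finset.mem_filter] at hj
          push_neg at hj
          obtain ⟨-, i, hi⟩ := hj
          have h2 : δ * ((A i).card : ℝ) / r
              < |(((A i).filter (fun x => H a x = j)).card : ℝ) - ((A i).card : ℝ) / r| := hi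
          have hAi := hA i
          have hlb : δ ^ 2 * κ ^ 2 * (n:ℝ) ^ 2 / r ^ 2 ≤ (δ * ((A i).card : ℝ) / r) ^ 2 := by
            have hsq : κ ^ 2 * (n:ℝ) ^ 2 ≤ ((A i).card : ℝ) ^ 2 := by
              nlinarith [mul_nonneg hκ0.le hn0.le]
            calc δ ^ 2 * κ ^ 2 * (n:ℝ) ^ 2 / r ^ 2
                = δ ^ 2 * (κ ^ 2 * (n:ℝ) ^ 2) / r ^ 2 := by ring
              _ ≤ δ ^ 2 * (((A i).card : ℝ) ^ 2) / r ^ 2 := by gcongr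
              _ = (δ * ((A i).card : ℝ) / r) ^ 2 := by ring
          refine hlb.trans ?_
          have h3 : (δ * ((A i).card : ℝ) / r) ^ 2
              ≤ ((((A i).filter fun x => H a x = j).card : ℝ) - (A i).card / r) ^ 2 := by
            rw [← sq_abs ((((A i).filter fun x => H a x = j).card : ℝ) - (A i).card / r)]
            have h4 : 0 ≤ δ * ((A i).card : ℝ) / r := by positivity
            nlinarith
          refine h3.trans ?_
          exact Finset.single_le_sum (f := fun i => ((((A i).filter fun x => H a x = j).card : ℝ)
            - (A i).card / r) ^ 2) (fun i _ => sq_nonneg _) (Finset.mem_univ i)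
        calc (Q.card : ℝ) * (δ ^ 2 * κ ^ 2 * n ^ 2 / r ^ 2)
            = ∑ _j ∈ Q, (δ ^ 2 * κ ^ 2 * (n:ℝ) ^ 2 / r ^ 2) := by simp [Finset.sum_const]
          _ ≤ ∑ j ∈ Q, ∑ i : Fin 3,
              ((((A i).filter fun x => H a x = j).card : ℝ) - (A i).card / r) ^ 2 :=
                Finset.sum_le_sum hperj
          _ ≤ ∑ j : Fin r, ∑ i : Fin 3,
              ((((A i).filter fun x => H a x = j).card : ℝ) - (A i).card / r) ^ 2 :=
                Finset.sum_le_sum_of_subset_of_nonneg (Finset.subset_univ Q)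
                  (fun _ _ _ => Finset.sum_nonneg fun _ _ => sq_nonneg _)
          _ = ∑ i : Fin 3, ∑ j : Fin r,
              ((((A i).filter fun x => H a x = j).card : ℝ) - (A i).card / r) ^ 2 :=
                Finset.sum_comm
      -- now conclude Q.card ≤ δ r
      have hb' : 3 ≤ δ ^ 3 * κ ^ 2 * b := by
        rw [div_le_iff₀ (by positivity)] at hb
        linarith
      have hnrb : (n : ℝ) = (r : ℝ) * b := by exact_mod_cast congrArg (Nat.cast (R := ℝ)) hn
      have hb0' : (0:ℝ) < b := by exact_mod_cast hb0
      have hQ0 : (0:ℝ) ≤ Q.card := Nat.cast_nonneg _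
      have hkey' : (Q.card : ℝ) * (δ ^ 2 * κ ^ 2 * (n:ℝ) ^ 2) ≤ 3 * (n:ℝ) * (r:ℝ) ^ 2 := by
        have h := mul_le_mul_of_nonneg_right hkey (pow_pos hr0 2).le
        have heq : (Q.card : ℝ) * (δ ^ 2 * κ ^ 2 * (n:ℝ) ^ 2 / (r:ℝ) ^ 2) * (r:ℝ) ^ 2
            = (Q.card : ℝ) * (δ ^ 2 * κ ^ 2 * (n:ℝ) ^ 2) := by
          field_simp
        rw [heq] at h
        exact h
      have hkey2 : (Q.card : ℝ) * (δ ^ 2 * κ ^ 2 * (r:ℝ) ^ 2 * (b:ℝ) ^ 2)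
          ≤ 3 * ((r:ℝ) ^ 3 * (b:ℝ)) := by
        rw [hnrb] at hkey'
        nlinarith [hkey']
      by_contra hcon
      push_neg at hcon
      have hC : (0:ℝ) < δ ^ 2 * κ ^ 2 * (r:ℝ) ^ 2 * (b:ℝ) ^ 2 := by positivity
      have e1 : (3:ℝ) * ((r:ℝ) ^ 3 * (b:ℝ)) ≤ δ ^ 3 * κ ^ 2 * (b:ℝ) * ((r:ℝ) ^ 3 * (b:ℝ)) :=
        mul_le_mul_of_nonneg_right hb' (by positivity)
      have e2 : δ * (r:ℝ) * (δ ^ 2 * κ ^ 2 * (r:ℝ) ^ 2 * (b:ℝ) ^ 2)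
          < (Q.card : ℝ) * (δ ^ 2 * κ ^ 2 * (r:ℝ) ^ 2 * (b:ℝ) ^ 2) :=
        mul_lt_mul_of_pos_right hcon hC
      have eq2 : δ ^ 3 * κ ^ 2 * (b:ℝ) * ((r:ℝ) ^ 3 * (b:ℝ))
          = δ * (r:ℝ) * (δ ^ 2 * κ ^ 2 * (r:ℝ) ^ 2 * (b:ℝ) ^ 2) := by ring
      linarith [e1, e2, hkey2]
    · intro j hj i
      rw [hQ, Finset.mem_filter] at hj
      push_neg at hj
      have := hj (Finset.mem_univ j)
      exact this i
  · -- trivial case: n = 1, hence r = 1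
    have hn1 : n = 1 := by
      have h0 : 0 < n := by rw [hn]; positivity
      omega
    have hr1 : r = 1 := by
      rw [hn1] at hn
      exact Nat.eq_one_of_mul_eq_one_right hn.symm
    subst hr1
    refine ⟨⟨0, hN⟩, ∅, by simpa using by positivity, ?_⟩
    intro j _ i
    have hall : ∀ x ∈ A i, H ⟨0, hN⟩ x = j := fun x _ => Subsingleton.elim _ _
    rw [Finset.filter_true_of_mem hall]
    simp only [Nat.cast_one, div_one]
    rw [sub_self, abs_zero]
    exact mul_nonneg hδ.le (Nat.cast_nonneg _)
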